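/- Let d ≥ 1, let 0 < ε < 1, and let M be a d × d complex matrix such that ‖M Mᴴ − I‖ ≤ ε/(2(d + ε)) in spectral norm, where Mᴴ is the conjugate transpose. Then M Mᴴ is positive definite (in particular invertible), and there exists a unitary matrix U ∈ U(d) with ‖U − M‖ ≤ ε in spectral norm; moreover one may take U = (M Mᴴ)^{-1/2} M, where (M Mᴴ)^{-1/2} is the inverse of the positive semidefinite square root of M Mᴴ. -/

import Mathlib

open scoped ComplexOrder

set_option synthInstance.maxHeartbeats 400000
set_option maxHeartbeats 1000000

/-- The positive semidefinite square root of a positive semidefinite matrix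
(`Matrix.PosSemidef.sqrt` of the older Mathlib, removed since; same definition). -/
noncomputable def Matrix.PosSemidef.sqrt {n 𝕜 : Type*} [Fintype n] [RCLike 𝕜] [DecidableEq n]
    {A : Matrix n n 𝕜} (hA : A.PosSemidef) : Matrix n n 𝕜 :=
  hA.1.eigenvectorUnitary.1 * Matrix.diagonal ((↑) ∘ (√·) ∘ hA.1.eigenvalues) *
    (star hA.1.eigenvectorUnitary : Matrix n n 𝕜)

/-- The spectral norm (ℓ²→ℓ² operator norm) of a square complex matrix. -/
noncomputable def specNorm {n : Type*} [Fintype n] [DecidableEq n] (M : Matrix n n ℂ) : ℝ :=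
  ‖Matrix.toEuclideanCLM (𝕜 := ℂ) M‖

namespace PseudoNetAux

open Matrix

variable {n : Type*} [Fintype n] [DecidableEq n]

lemma specNorm_nonneg (A : Matrix n n ℂ) : 0 ≤ specNorm A := norm_nonneg _

lemma specNorm_mul_le (A B : Matrix n n ℂ) : specNorm (A * B) ≤ specNorm A * specNorm B := by
  unfold specNorm
  rw [_root_.map_mul]
  exact norm_mul_le _ _

lemma specNorm_one [Nonempty n] : specNorm (1 : Matrix n n ℂ) = 1 := by
  unfold specNorm
  rw [_root_.map_one]
  exact norm_one

lemma specNorm_unitary [Nonempty n] {V : Matrix n n ℂ} (hV : V ∈ Matrix.unitaryGroup n ℂ) :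
    specNorm V = 1 := by
  have h : specNorm V * specNorm V = 1 := by
    unfold specNorm
    rw [← CStarRing.norm_star_mul_self (x := Matrix.toEuclideanCLM (𝕜 := ℂ) V), ← map_star, ← _root_.map_mul, Matrix.mem_unitaryGroup_iff'.mp hV, _root_.map_one, norm_one]
  have h0 : 0 ≤ specNorm V := specNorm_nonneg V
  nlinarith

lemma specNorm_self_mul_conjTranspose (A : Matrix n n ℂ) :
    specNorm (A * Aᴴ) = specNorm A * specNorm A := by
  unfold specNorm
  rw [_root_.map_mul, ← Matrix.star_eq_conjTranspose, map_star]
  exact CStarRing.norm_self_mul_star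

lemma specNorm_le_one_add_sub_one [Nonempty n] (A : Matrix n n ℂ) :
    specNorm A ≤ 1 + specNorm (A - 1) := by
  unfold specNorm
  have h : Matrix.toEuclideanCLM (𝕜 := ℂ) A =
      1 + (Matrix.toEuclideanCLM (𝕜 := ℂ) (A - 1)) := by
    rw [_root_.map_sub, _root_.map_one]; abel
  rw [h]
  refine (norm_add_le _ _).trans ?_
  rw [norm_one]

lemma toEuclideanCLM_apply (A : Matrix n n ℂ) (x : EuclideanSpace ℂ n) :
    (Matrix.toEuclideanCLM (𝕜 := ℂ) A) x =
      (WithLp.equiv 2 (n → ℂ)).symm (A *ᵥ (WithLp.equiv 2 (n → ℂ)) x) :=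
  rfl

/-- The spectral norm of a diagonal matrix is at most any uniform bound on the entries. -/
lemma specNorm_diagonal_le (μ : n → ℂ) {c : ℝ} (hc : 0 ≤ c) (h : ∀ i, ‖μ i‖ ≤ c) :
    specNorm (Matrix.diagonal μ) ≤ c := by
  unfold specNorm
  refine ContinuousLinearMap.opNorm_le_bound _ hc fun x => ?_
  rw [toEuclideanCLM_apply]
  rw [EuclideanSpace.norm_eq, EuclideanSpace.norm_eq]
  rw [← Real.sqrt_sq hc, ← Real.sqrt_mul (sq_nonneg c)]
  apply Real.sqrt_le_sqrt
  rw [Finset.mul_sum]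
  refine Finset.sum_le_sum fun i _ => ?_
  have h1 : ‖(WithLp.equiv 2 (n → ℂ)).symm
      (Matrix.diagonal μ *ᵥ (WithLp.equiv 2 (n → ℂ)) x) i‖ = ‖μ i * x i‖ := by
    congr 1
    simp [Matrix.mulVec_diagonal]
  rw [h1, norm_mul]
  have h4 := h i
  have h2 : (0:ℝ) ≤ ‖x i‖ := norm_nonneg _
  have h3 : (0:ℝ) ≤ ‖μ i‖ := norm_nonneg _
  nlinarith [mul_le_mul h4 h4 h3 hc, sq_nonneg ‖x i‖]

/-- Each diagonal entry is bounded by the spectral norm. -/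
lemma le_specNorm_diagonal (μ : n → ℂ) (i : n) : ‖μ i‖ ≤ specNorm (Matrix.diagonal μ) := by
  have h := (Matrix.toEuclideanCLM (𝕜 := ℂ) (Matrix.diagonal μ)).le_opNorm
    (EuclideanSpace.single i (1 : ℂ))
  rw [EuclideanSpace.norm_single, norm_one, mul_one, toEuclideanCLM_apply] at h
  have h2 : Matrix.diagonal μ *ᵥ ((WithLp.equiv 2 (n → ℂ)) (EuclideanSpace.single i (1 : ℂ))) =
      Pi.single i (μ i) := by
    have heq : ((WithLp.equiv 2 (n → ℂ)) (EuclideanSpace.single i (1 : ℂ))) =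
        Pi.single i (1 : ℂ) := rfl
    rw [heq, Matrix.diagonal_mulVec_single, mul_one]
  rw [h2] at h
  have h3 : ‖(WithLp.equiv 2 (n → ℂ)).symm (Pi.single i (μ i))‖ = ‖μ i‖ := by
    have heq : (WithLp.equiv 2 (n → ℂ)).symm (Pi.single i (μ i)) =
        EuclideanSpace.single i (μ i) := rfl
    rw [heq, EuclideanSpace.norm_single]
  rwa [h3] at h

/-- Unitary conjugation of a positive definite matrix is positive definite. -/
lemma posDef_conj {V : Matrix n n ℂ} (hV : V ∈ Matrix.unitaryGroup n ℂ)
    {D : Matrix n n ℂ} (hD : D.PosDef) : (V * D * Vᴴ).PosDef := by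
  have hu : IsUnit V := (Matrix.isUnit_iff_isUnit_det V).mpr
    (Matrix.isUnit_det_of_right_inverse (Matrix.mem_unitaryGroup_iff.mp hV))
  exact hD.mul_mul_conjTranspose_same (Matrix.vecMul_injective_of_isUnit hu)

/-- The key real inequality. -/
lemma inv_sqrt_sub_one_bound {l δ : ℝ} (hδ0 : 0 ≤ δ) (hδ : δ < 1/2) (hl : |l - 1| ≤ δ) :
    |(Real.sqrt l)⁻¹ - 1| ≤ δ := by
  obtain ⟨hl1, hl2⟩ := abs_le.mp hl
  have hlpos : (1:ℝ)/2 < l := by linarith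
  set s := Real.sqrt l with hs_def
  have hs0 : 0 ≤ s := Real.sqrt_nonneg l
  have hss : s * s = l := Real.mul_self_sqrt (by linarith)
  have hs07 : 0.7 ≤ s := by nlinarith
  have hspos : 0 < s := by linarith
  rw [abs_le]
  constructor
  · have hsle : s ≤ 1 + δ := by nlinarith
    have h1 : (1 - δ) * s ≤ 1 := by nlinarith
    have h2 : 1 - δ ≤ s⁻¹ := by
      rw [← one_div, le_div_iff₀ hspos]
      linarith
    linarith
  · have haux : 0 ≤ s * s + s - 1 := by nlinarith
    have h1 : 1 ≤ (1 + δ) * s := by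
      rcases le_or_gt 1 s with h | h
      · nlinarith
      · nlinarith [mul_nonneg (sub_nonneg.mpr h.le) haux,
          mul_le_mul_of_nonneg_right (show 1 - s * s ≤ δ by nlinarith) hs0]
    have h2 : s⁻¹ ≤ 1 + δ := by
      rw [← one_div, div_le_iff₀ hspos]
      linarith
    linarith

end PseudoNetAux

open PseudoNetAux Matrix

/-- **Rounding half of the ε-pseudo-net lemma.** If `‖M Mᴴ - I‖ ≤ ε/(2(d + ε))` in spectral
norm, then `M Mᴴ` is positive definite, and `(M Mᴴ)^{-1/2} M` is a unitary matrix within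
spectral distance `ε` of `M`. -/
theorem pseudo_net_rounding (d : ℕ) (hd : 1 ≤ d) (ε : ℝ) (hε0 : 0 < ε) (hε1 : ε < 1)
    (M : Matrix (Fin d) (Fin d) ℂ)
    (hM : specNorm (M * M.conjTranspose - 1) ≤ ε / (2 * ((d : ℝ) + ε))) :
    ∃ hP : (M * M.conjTranspose).PosDef,
      (hP.posSemidef.sqrt⁻¹ * M) ∈ Matrix.unitaryGroup (Fin d) ℂ ∧
        specNorm (hP.posSemidef.sqrt⁻¹ * M - M) ≤ ε := by
  haveI : Nonempty (Fin d) := ⟨⟨0, hd⟩⟩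
  set B := M * M.conjTranspose with hB_def
  set δ := ε / (2 * ((d : ℝ) + ε)) with hδ_def
  have hd1 : (1:ℝ) ≤ (d:ℝ) := by exact_mod_cast hd
  have hden : (0:ℝ) < 2 * ((d : ℝ) + ε) := by linarith
  have hδ0 : 0 < δ := div_pos hε0 hden
  have hδhalf : δ < 1/2 := by
    rw [hδ_def, div_lt_iff₀ hden]
    nlinarith
  have hnorm : specNorm (B - 1) ≤ δ := hM
  have hB : B.PosSemidef := Matrix.posSemidef_self_mul_conjTranspose M
  -- introduce the eigendecomposition data and then make it opaque
  set V : Matrix (Fin d) (Fin d) ℂ := (hB.1.eigenvectorUnitary : Matrix (Fin d) (Fin d) ℂ)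
    with hV_def
  set lam := hB.1.eigenvalues with hlam_def
  have hV : V ∈ Matrix.unitaryGroup (Fin d) ℂ := hB.1.eigenvectorUnitary.2
  have h1 : (star V) * B * V = Matrix.diagonal ((↑) ∘ lam) :=
    by have := hB.1.conjStarAlgAut_star_eigenvectorUnitary
       rw [Unitary.conjStarAlgAut_star_apply] at this
       exact this
  have hspec : B = V * Matrix.diagonal ((↑) ∘ lam) * star V := by
    have := hB.1.spectral_theorem
    rw [Unitary.conjStarAlgAut_apply] at this
    exact this
  have hsqrt_eq : hB.sqrt = V * Matrix.diagonal ((↑) ∘ Real.sqrt ∘ lam) * star V := rfl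
  clear_value V lam
  clear hV_def hlam_def
  rw [Matrix.star_eq_conjTranspose] at h1 hspec hsqrt_eq
  -- basic unitary facts
  have hVs : Vᴴ ∈ Matrix.unitaryGroup (Fin d) ℂ := by
    rw [← Matrix.star_eq_conjTranspose]
    exact Unitary.star_mem hV
  have hVV : Vᴴ * V = 1 := by
    rw [← Matrix.star_eq_conjTranspose]; exact Matrix.mem_unitaryGroup_iff'.mp hV
  have hVV' : V * Vᴴ = 1 := by
    rw [← Matrix.star_eq_conjTranspose]; exact Matrix.mem_unitaryGroup_iff.mp hV
  -- eigenvalue bounds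
  have hlam_bound : ∀ i, |lam i - 1| ≤ δ := by
    intro i
    have hdiag : Vᴴ * (B - 1) * V = Matrix.diagonal (fun i => ((lam i : ℂ) - 1)) := by
      rw [mul_sub, sub_mul, mul_one, h1, hVV, ← Matrix.diagonal_one,
        Matrix.diagonal_sub]
      rfl
    have hentry : ‖((lam i : ℂ) - 1)‖ ≤ specNorm (Matrix.diagonal (fun i => ((lam i : ℂ) - 1))) :=
      le_specNorm_diagonal (fun i => ((lam i : ℂ) - 1)) i
    have hconj : specNorm (Vᴴ * (B - 1) * V) ≤ specNorm (B - 1) := by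
      calc specNorm (Vᴴ * (B - 1) * V)
          ≤ specNorm (Vᴴ * (B - 1)) * specNorm V := specNorm_mul_le _ _
        _ ≤ specNorm Vᴴ * specNorm (B - 1) * specNorm V := by
            have := specNorm_mul_le Vᴴ (B - 1)
            nlinarith [specNorm_nonneg V, specNorm_nonneg (B-1), specNorm_nonneg Vᴴ]
        _ = specNorm (B - 1) := by rw [specNorm_unitary hV, specNorm_unitary hVs]; ring
    have hfin : ‖((lam i : ℂ) - 1)‖ ≤ δ := by
      rw [← hdiag] at hentry
      exact hentry.trans (hconj.trans hnorm)
    calc |lam i - 1| = ‖((lam i : ℂ) - 1)‖ := by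
          rw [← Complex.ofReal_one, ← Complex.ofReal_sub, Complex.norm_real, Real.norm_eq_abs]
      _ ≤ δ := hfin
  have hlam_lo : ∀ i, 1 - δ ≤ lam i := fun i => by
    have := abs_le.mp (hlam_bound i); linarith [this.1]
  have hlam_pos : ∀ i, 0 < lam i := fun i => by linarith [hlam_lo i, hδhalf]
  -- positive definiteness
  have hP : B.PosDef := by
    rw [hspec]
    exact posDef_conj hV (Matrix.PosDef.diagonal fun i => by
      simpa [Function.comp] using Complex.zero_lt_real.mpr (hlam_pos i))
  refine ⟨hP, ?_⟩
  have hprf : hP.posSemidef = hB := rfl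
  rw [hprf, hsqrt_eq]
  -- the inverse of the square root
  set T : Matrix (Fin d) (Fin d) ℂ :=
    V * Matrix.diagonal (fun i => ((Real.sqrt (lam i))⁻¹ : ℂ)) * Vᴴ with hT_def
  set S : Matrix (Fin d) (Fin d) ℂ :=
    V * Matrix.diagonal ((↑) ∘ Real.sqrt ∘ lam) * Vᴴ with hS_def
  have hsqrt_ne : ∀ i, (Real.sqrt (lam i) : ℂ) ≠ 0 := fun i =>
    Complex.ofReal_ne_zero.mpr (ne_of_gt (Real.sqrt_pos.mpr (hlam_pos i)))
  have hST : S * T = 1 := by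
    rw [hS_def, hT_def]
    calc V * Matrix.diagonal ((↑) ∘ Real.sqrt ∘ lam) * Vᴴ *
          (V * Matrix.diagonal (fun i => ((Real.sqrt (lam i))⁻¹ : ℂ)) * Vᴴ)
        = V * (Matrix.diagonal ((↑) ∘ Real.sqrt ∘ lam) * (Vᴴ * V) *
            Matrix.diagonal (fun i => ((Real.sqrt (lam i))⁻¹ : ℂ))) * Vᴴ := by
          simp only [mul_assoc]
      _ = 1 := by
          rw [hVV, mul_one, Matrix.diagonal_mul_diagonal]
          have heq : (fun i => ((↑) ∘ Real.sqrt ∘ lam) i * ((Real.sqrt (lam i))⁻¹ : ℂ)) =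
              fun _ => (1:ℂ) := by
            funext i
            simp only [Function.comp_apply, Complex.ofReal_inv]
            exact mul_inv_cancel₀ (hsqrt_ne i)
          rw [heq, Matrix.diagonal_one, mul_one, hVV']
  have hTS : T * S = 1 := by
    rw [hS_def, hT_def]
    calc V * Matrix.diagonal (fun i => ((Real.sqrt (lam i))⁻¹ : ℂ)) * Vᴴ *
          (V * Matrix.diagonal ((↑) ∘ Real.sqrt ∘ lam) * Vᴴ)
        = V * (Matrix.diagonal (fun i => ((Real.sqrt (lam i))⁻¹ : ℂ)) * (Vᴴ * V) *
            Matrix.diagonal ((↑) ∘ Real.sqrt ∘ lam)) * Vᴴ := by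
          simp only [mul_assoc]
      _ = 1 := by
          rw [hVV, mul_one, Matrix.diagonal_mul_diagonal]
          have heq : (fun i => ((Real.sqrt (lam i))⁻¹ : ℂ) * ((↑) ∘ Real.sqrt ∘ lam) i) =
              fun _ => (1:ℂ) := by
            funext i
            simp only [Function.comp_apply, Complex.ofReal_inv]
            exact inv_mul_cancel₀ (hsqrt_ne i)
          rw [heq, Matrix.diagonal_one, mul_one, hVV']
  have hSinv : S⁻¹ = T := Matrix.inv_eq_right_inv hST
  have hTherm : Tᴴ = T := by
    rw [hT_def, Matrix.conjTranspose_mul, Matrix.conjTranspose_mul,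
      Matrix.conjTranspose_conjTranspose, Matrix.diagonal_conjTranspose]
    have heq : star (fun i => ((Real.sqrt (lam i))⁻¹ : ℂ)) =
        fun i => ((Real.sqrt (lam i))⁻¹ : ℂ) := by
      funext i
      simp [← Complex.ofReal_inv]
    rw [heq, mul_assoc]
  have hSS : S * S = B := by
    rw [hS_def, hspec]
    calc V * Matrix.diagonal ((↑) ∘ Real.sqrt ∘ lam) * Vᴴ *
          (V * Matrix.diagonal ((↑) ∘ Real.sqrt ∘ lam) * Vᴴ)
        = V * (Matrix.diagonal ((↑) ∘ Real.sqrt ∘ lam) * (Vᴴ * V) *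
            Matrix.diagonal ((↑) ∘ Real.sqrt ∘ lam)) * Vᴴ := by
          simp only [mul_assoc]
      _ = V * Matrix.diagonal ((↑) ∘ lam) * Vᴴ := by
          rw [hVV, mul_one, Matrix.diagonal_mul_diagonal]
          congr 3
          funext i
          simp only [Function.comp_apply, ← Complex.ofReal_mul,
            Real.mul_self_sqrt (hlam_pos i).le]
  constructor
  · -- unitarity
    rw [Matrix.mem_unitaryGroup_iff, Matrix.star_eq_conjTranspose, hSinv,
      Matrix.conjTranspose_mul]
    calc T * M * (Mᴴ * Tᴴ) = T * (M * Mᴴ) * Tᴴ := by simp only [mul_assoc]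
      _ = T * (S * S) * T := by rw [hTherm, hSS, hB_def]
      _ = (T * S) * (S * T) := by simp only [mul_assoc]
      _ = 1 := by rw [hTS, hST, one_mul]
  · -- norm bound
    rw [hSinv]
    have hfactor : T * M - M = (T - 1) * M := by rw [sub_mul, one_mul]
    have hT1 : T - 1 = V * (Matrix.diagonal (fun i => ((Real.sqrt (lam i))⁻¹ : ℂ) - 1)) * Vᴴ := by
      have h2 : Matrix.diagonal (fun i => ((Real.sqrt (lam i))⁻¹ : ℂ) - 1) =
          Matrix.diagonal (fun i => ((Real.sqrt (lam i))⁻¹ : ℂ)) - 1 := by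
        rw [← Matrix.diagonal_one, Matrix.diagonal_sub]
      rw [h2, mul_sub, sub_mul, mul_one, hVV', hT_def]
    have hTd : specNorm (T - 1) ≤ δ := by
      rw [hT1]
      have hdiagnorm :
          specNorm (Matrix.diagonal (fun i => ((Real.sqrt (lam i))⁻¹ : ℂ) - 1)) ≤ δ := by
        refine specNorm_diagonal_le (fun i => ((Real.sqrt (lam i))⁻¹ : ℂ) - 1) hδ0.le fun i => ?_
        show ‖((Real.sqrt (lam i))⁻¹ : ℂ) - 1‖ ≤ δ
        have heq : ((Real.sqrt (lam i))⁻¹ : ℂ) - 1 = (((Real.sqrt (lam i))⁻¹ - 1 : ℝ) : ℂ) := by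
          push_cast; ring
        rw [heq, Complex.norm_real, Real.norm_eq_abs]
        exact inv_sqrt_sub_one_bound hδ0.le hδhalf (hlam_bound i)
      calc specNorm (V * Matrix.diagonal (fun i => ((Real.sqrt (lam i))⁻¹ : ℂ) - 1) * Vᴴ)
          ≤ specNorm (V * Matrix.diagonal (fun i => ((Real.sqrt (lam i))⁻¹ : ℂ) - 1)) *
              specNorm Vᴴ := specNorm_mul_le _ _
        _ ≤ specNorm V * specNorm (Matrix.diagonal (fun i => ((Real.sqrt (lam i))⁻¹ : ℂ) - 1)) *
              specNorm Vᴴ := by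
            have := specNorm_mul_le V
              (Matrix.diagonal (fun i => ((Real.sqrt (lam i))⁻¹ : ℂ) - 1))
            nlinarith [specNorm_nonneg Vᴴ, specNorm_nonneg V,
              specNorm_nonneg (Matrix.diagonal (fun i => ((Real.sqrt (lam i))⁻¹ : ℂ) - 1))]
        _ ≤ δ := by
            rw [specNorm_unitary hV, specNorm_unitary hVs, one_mul, mul_one]
            exact hdiagnorm
    have hMnorm : specNorm M ≤ 2 := by
      have hcc : specNorm (M * Mᴴ) = specNorm M * specNorm M :=
        specNorm_self_mul_conjTranspose M
      have h3 : specNorm B ≤ 1 + δ := by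
        have := specNorm_le_one_add_sub_one (n := Fin d) B
        linarith
      have h4 : specNorm M * specNorm M ≤ 1 + δ := by
        rw [← hcc, ← hB_def]; exact h3
      nlinarith [specNorm_nonneg M]
    calc specNorm (T * M - M) = specNorm ((T - 1) * M) := by rw [hfactor]
      _ ≤ specNorm (T - 1) * specNorm M := specNorm_mul_le _ _
      _ ≤ δ * 2 := by
          have h0 : (0:ℝ) ≤ specNorm (T - 1) := specNorm_nonneg _
          nlinarith [specNorm_nonneg M]
      _ ≤ ε := by
          rw [hδ_def, div_mul_eq_mul_div, mul_comm, div_le_iff₀ hden]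
          nlinarith
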